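/- Let $\tau_1 \ge \dots \ge \tau_R$, $\mu_1,\dots,\mu_R$, and $\bar\mu$ be reals with $|\mu_1 - \bar\mu| \le \dots \le |\mu_R - \bar\mu|$. Then $\left| \frac{\sum_{r=1}^R e^{\tau_r}\mu_r}{\sum_{r=1}^R e^{\tau_r}} - \bar\mu\right| \le \frac{1}{R}\sum_{r=1}^R |\mu_r - \bar\mu|$. -/
import Mathlib


theorem stmt_4 (R : ℕ) (hR : 0 < R) (τ μ : Fin R → ℝ) (μbar : ℝ)
    (hτ : Antitone τ) (hμ : Monotone fun r => |μ r - μbar|) :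
    |(∑ r : Fin R, Real.exp (τ r) * μ r) / (∑ r : Fin R, Real.exp (τ r)) - μbar| ≤
      (1 / (R : ℝ)) * ∑ r : Fin R, |μ r - μbar| := by
  set e : Fin R → ℝ := fun r => Real.exp (τ r) with he
  have hS : (0:ℝ) < ∑ r : Fin R, e r := by
    apply Finset.sum_pos (fun i _ => Real.exp_pos _)
    exact ⟨⟨0, hR⟩, Finset.mem_univ _⟩
  have hanti : Antivary e (fun r => |μ r - μbar|) := by
    intro i j hij
    have : i < j := by
      by_contra h
      exact absurd (hμ (le_of_not_gt h)) (not_le.2 hij)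
    exact Real.exp_le_exp.2 (hτ this.le)
  have hcheb := hanti.card_mul_sum_le_sum_mul_sum
  simp only [Fintype.card_fin] at hcheb
  have hRpos : (0:ℝ) < R := Nat.cast_pos.mpr hR
  have key : (∑ r : Fin R, e r * |μ r - μbar|) / (∑ r : Fin R, e r)
      ≤ (1 / (R : ℝ)) * ∑ r : Fin R, |μ r - μbar| := by
    rw [div_le_iff₀ hS]
    have h := mul_le_mul_of_nonneg_left hcheb (le_of_lt (one_div_pos.2 hRpos))
    calc (∑ r : Fin R, e r * |μ r - μbar|)
        = 1/(R:ℝ) * ((R:ℝ) * ∑ r : Fin R, e r * |μ r - μbar|) := by field_simp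
      _ ≤ 1/(R:ℝ) * ((∑ r : Fin R, e r) * ∑ r : Fin R, |μ r - μbar|) := h
      _ = 1/(R:ℝ) * (∑ r : Fin R, |μ r - μbar|) * (∑ r : Fin R, e r) := by ring
  have hsum : ∑ r : Fin R, e r * (μ r - μbar)
      = (∑ r : Fin R, e r * μ r) - μbar * ∑ r : Fin R, e r := by
    simp only [mul_sub, Finset.sum_sub_distrib]
    congr 1
    rw [Finset.mul_sum]
    exact Finset.sum_congr rfl fun i _ => (mul_comm _ _)
  calc |(∑ r : Fin R, e r * μ r) / (∑ r : Fin R, e r) - μbar|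
      = |∑ r : Fin R, e r * (μ r - μbar)| / (∑ r : Fin R, e r) := by
        have h2 : (∑ r : Fin R, e r * μ r) / (∑ r : Fin R, e r) - μbar
            = (∑ r : Fin R, e r * (μ r - μbar)) / (∑ r : Fin R, e r) := by
          rw [hsum, sub_div, mul_div_assoc, div_self hS.ne', mul_one]
        rw [h2, abs_div, abs_of_pos hS]
    _ ≤ (∑ r : Fin R, e r * |μ r - μbar|) / (∑ r : Fin R, e r) := by
        gcongr
        refine (Finset.abs_sum_le_sum_abs _ _).trans (le_of_eq ?_)
        refine Finset.sum_congr rfl fun i _ => ?_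
        rw [abs_mul, abs_of_pos (Real.exp_pos _)]
    _ ≤ (1 / (R : ℝ)) * ∑ r : Fin R, |μ r - μbar| := key
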